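/- Equivalence of continuous L_p seminorm and discrete ℓ_p norm of finite differences for splines: Let n ≥ 1, h > 0, p > 0, K ∈ ℕ, and f = Σ_{k=0}^{K−1} c_k β_{n,h}(· − hk). Then the n-th derivative D^n f (defined almost everywhere; it is piecewise constant on the grid hℤ) satisfies ‖D^n f‖_{L_p} = h^{−(n − 1/p)} ‖d^n * c‖_{ℓ_p}, where d^n is the n-th order finite-difference sequence given by d^n_j = (−1)^j · binomial(n, j) for j = 0, …, n, and (d^n * c)_k = Σ_j d^n_j c_{k−j}. -/

import Mathlib

open MeasureTheory Real Filter Topology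

/-- Causal polynomial B-spline of degree `n`: `β₀ = 𝟙_{[0,1)}` and
`βₙ = β_{n−1} * β₀` (convolution), supported on `[0, n+1]`. -/
noncomputable def bspline : ℕ → ℝ → ℝ
  | 0 => Set.indicator (Set.Ico (0 : ℝ) 1) (fun _ => (1 : ℝ))
  | n + 1 => fun s =>
      ∫ u : ℝ, bspline n (s - u) * Set.indicator (Set.Ico (0 : ℝ) 1) (fun _ => (1 : ℝ)) u

lemma bspline_succ (n : ℕ) (s : ℝ) :
    bspline (n + 1) s = ∫ t in (s - 1)..s, bspline n t := by
  have h1 : ∀ u : ℝ, bspline n (s - u) * Set.indicator (Set.Ico (0 : ℝ) 1) (fun _ => (1:ℝ)) u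
      = Set.indicator (Set.Ico (0 : ℝ) 1) (fun u => bspline n (s - u)) u := by
    intro u
    by_cases hu : u ∈ Set.Ico (0:ℝ) 1 <;> simp [Set.indicator_apply, hu]
  rw [show bspline (n+1) s = ∫ u : ℝ, bspline n (s - u) *
      Set.indicator (Set.Ico (0 : ℝ) 1) (fun _ => (1:ℝ)) u from rfl]
  simp_rw [h1]
  rw [MeasureTheory.integral_indicator measurableSet_Ico,
    MeasureTheory.setIntegral_congr_set MeasureTheory.Ico_ae_eq_Ioc,
    ← intervalIntegral.integral_of_le (by norm_num : (0:ℝ) ≤ 1),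
    intervalIntegral.integral_comp_sub_left (fun t => bspline n t) s]
  norm_num

lemma bspline_props (n : ℕ) : Measurable (bspline n) ∧ (∀ s, 0 ≤ bspline n s)
    ∧ (∀ s, bspline n s ≤ 1) ∧ (∀ s, s < 0 ∨ ((n:ℝ) + 1) ≤ s → bspline n s = 0) := by
  induction n with
  | zero =>
    refine ⟨(measurable_const).indicator measurableSet_Ico, fun s => ?_, fun s => ?_, fun s hs => ?_⟩
    · exact Set.indicator_nonneg (fun _ _ => zero_le_one) s
    · by_cases hs : s ∈ Set.Ico (0:ℝ) 1 <;> simp [bspline, Set.indicator_apply, hs]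
    · have : s ∉ Set.Ico (0:ℝ) 1 := by
        rcases hs with hs | hs
        · exact fun hmem => absurd hmem.1 (not_le.mpr hs)
        · push_cast at hs; exact fun hmem => absurd hmem.2 (not_lt.mpr (by linarith))
      simp [bspline, Set.indicator_apply, this]
  | succ n ih =>
    obtain ⟨hm, h0, h1, hsupp⟩ := ih
    have hint : Integrable (bspline n) := by
      refine Integrable.mono' (g := Set.indicator (Set.Icc (0:ℝ) ((n:ℝ)+1)) (fun _ => (1:ℝ)))
        ?_ hm.aestronglyMeasurable (Filter.Eventually.of_forall fun s => ?_)
      · rw [integrable_indicator_iff measurableSet_Icc]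
        exact integrableOn_const measure_Icc_lt_top.ne
      · by_cases hs : s ∈ Set.Icc (0:ℝ) ((n:ℝ)+1)
        · rw [Set.indicator_of_mem hs]
          rw [Real.norm_eq_abs, abs_of_nonneg (h0 s)]; exact h1 s
        · rw [Set.indicator_of_notMem hs]
          have : s < 0 ∨ ((n:ℝ)+1) ≤ s := by
            rw [Set.mem_Icc, not_and_or] at hs
            rcases hs with hc | hc
            · exact Or.inl (not_le.mp hc)
            · exact Or.inr (le_of_lt (not_le.mp hc))
          rw [hsupp s this]; simp
    have hII : ∀ a b : ℝ, IntervalIntegrable (bspline n) volume a b :=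
      fun a b => hint.intervalIntegrable
    have hcont : Continuous (bspline (n+1)) := by
      have : Continuous fun s : ℝ => ∫ t in (0:ℝ)..s, bspline n t :=
        intervalIntegral.continuous_primitive hII 0
      have h2 : Continuous fun s : ℝ => (∫ t in (0:ℝ)..s, bspline n t)
          - ∫ t in (0:ℝ)..(s-1), bspline n t :=
        this.sub (this.comp (continuous_id.sub continuous_const))
      refine h2.congr fun s => ?_
      rw [bspline_succ, intervalIntegral.integral_interval_sub_left (hII 0 s) (hII 0 (s-1))]
    refine ⟨hcont.measurable, fun s => ?_, fun s => ?_, fun s hs => ?_⟩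
    · rw [bspline_succ]
      exact intervalIntegral.integral_nonneg (by linarith) (fun t _ => h0 t)
    · rw [bspline_succ]
      calc (∫ t in (s-1)..s, bspline n t) ≤ ∫ _t in (s-1)..s, (1:ℝ) :=
            intervalIntegral.integral_mono_on (by linarith) (hII _ _)
              intervalIntegrable_const (fun t _ => h1 t)
        _ = 1 := by simp
    · rw [bspline_succ]
      have : ∀ t ∈ Set.uIcc (s-1) s, bspline n t = 0 := by
        intro t ht
        rw [Set.uIcc_of_le (by linarith), Set.mem_Icc] at ht
        refine hsupp t ?_
        rcases hs with hs | hs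
        · exact Or.inl (lt_of_le_of_lt ht.2 hs)
        · push_cast at hs; exact Or.inr (by linarith [ht.1])
      calc (∫ t in (s-1)..s, bspline n t) = ∫ _t in (s-1)..s, (0:ℝ) :=
            intervalIntegral.integral_congr this
        _ = 0 := by simp


lemma bspline_integrable (n : ℕ) : Integrable (bspline n) := by
  obtain ⟨hm, h0, h1, hsupp⟩ := bspline_props n
  refine Integrable.mono' (g := Set.indicator (Set.Icc (0:ℝ) ((n:ℝ)+1)) (fun _ => (1:ℝ)))
    ?_ hm.aestronglyMeasurable (Filter.Eventually.of_forall fun s => ?_)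
  · rw [integrable_indicator_iff measurableSet_Icc]
    exact integrableOn_const measure_Icc_lt_top.ne
  · by_cases hs : s ∈ Set.Icc (0:ℝ) ((n:ℝ)+1)
    · rw [Set.indicator_of_mem hs]
      rw [Real.norm_eq_abs, abs_of_nonneg (h0 s)]; exact h1 s
    · rw [Set.indicator_of_notMem hs]
      have : s < 0 ∨ ((n:ℝ)+1) ≤ s := by
        rw [Set.mem_Icc, not_and_or] at hs
        rcases hs with hc | hc
        · exact Or.inl (not_le.mp hc)
        · exact Or.inr (le_of_lt (not_le.mp hc))
      rw [hsupp s this]; simp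

lemma bspline_continuous (n : ℕ) : Continuous (bspline (n+1)) := by
  have hII : ∀ a b : ℝ, IntervalIntegrable (bspline n) volume a b :=
    fun a b => (bspline_integrable n).intervalIntegrable
  have hc : Continuous fun s : ℝ => ∫ t in (0:ℝ)..s, bspline n t :=
    intervalIntegral.continuous_primitive hII 0
  have h2 : Continuous fun s : ℝ => (∫ t in (0:ℝ)..s, bspline n t)
      - ∫ t in (0:ℝ)..(s-1), bspline n t :=
    hc.sub (hc.comp (continuous_id.sub continuous_const))
  refine h2.congr fun s => ?_
  rw [bspline_succ, intervalIntegral.integral_interval_sub_left (hII 0 s) (hII 0 (s-1))]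

lemma bspline_hasDerivAt (n : ℕ) (s : ℝ) (hc1 : ContinuousAt (bspline n) s)
    (hc2 : ContinuousAt (bspline n) (s - 1)) :
    HasDerivAt (bspline (n+1)) (bspline n s - bspline n (s-1)) s := by
  have hII : ∀ a b : ℝ, IntervalIntegrable (bspline n) volume a b :=
    fun a b => (bspline_integrable n).intervalIntegrable
  have hmeas : StronglyMeasurableAtFilter (bspline n) (𝓝 s) :=
    (bspline_props n).1.stronglyMeasurable.stronglyMeasurableAtFilter
  have hmeas2 : StronglyMeasurableAtFilter (bspline n) (𝓝 (s-1)) :=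
    (bspline_props n).1.stronglyMeasurable.stronglyMeasurableAtFilter
  have HF : HasDerivAt (fun u : ℝ => ∫ t in (0:ℝ)..u, bspline n t) (bspline n s) s :=
    intervalIntegral.integral_hasDerivAt_right (hII 0 s) hmeas hc1
  have HG : HasDerivAt (fun u : ℝ => ∫ t in (0:ℝ)..u, bspline n t) (bspline n (s-1)) (s-1) :=
    intervalIntegral.integral_hasDerivAt_right (hII 0 (s-1)) hmeas2 hc2
  have HG2 : HasDerivAt (fun u : ℝ => ∫ t in (0:ℝ)..(u-1), bspline n t) (bspline n (s-1)) s := by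
    have := HG.comp s ((hasDerivAt_id s).sub_const 1)
    simpa [Function.comp_def] using this
  have := HF.sub HG2
  refine this.congr_of_eventuallyEq (Filter.Eventually.of_forall fun u => ?_)
  show bspline (n+1) u = (∫ t in (0:ℝ)..u, bspline n t) - ∫ t in (0:ℝ)..(u-1), bspline n t
  rw [bspline_succ]
  exact (intervalIntegral.integral_interval_sub_left (hII 0 u) (hII 0 (u-1))).symm
lemma bspline0_continuousAt {s : ℝ} (h0 : s ≠ 0) (h1 : s ≠ 1) :
    ContinuousAt (bspline 0) s := by
  rcases lt_or_gt_of_ne h0 with hlt | hgt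
  · have : bspline 0 =ᶠ[𝓝 s] fun _ => (0:ℝ) := by
      filter_upwards [Iio_mem_nhds hlt] with y hy
      simp only [bspline]
      exact Set.indicator_of_notMem (fun hm => absurd hm.1 (not_le.mpr hy)) _
    exact ContinuousAt.congr continuousAt_const this.symm
  rcases lt_or_gt_of_ne h1 with hlt1 | hgt1
  · have : bspline 0 =ᶠ[𝓝 s] fun _ => (1:ℝ) := by
      filter_upwards [Ioo_mem_nhds hgt hlt1] with y hy
      simp only [bspline]
      exact Set.indicator_of_mem (Set.mem_Ico.mpr ⟨le_of_lt hy.1, hy.2⟩) _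
    exact ContinuousAt.congr continuousAt_const this.symm
  · have : bspline 0 =ᶠ[𝓝 s] fun _ => (0:ℝ) := by
      filter_upwards [Ioi_mem_nhds hgt1] with y hy
      simp only [bspline]
      exact Set.indicator_of_notMem (fun hm => absurd hm.2 (not_lt.mpr (le_of_lt hy))) _
    exact ContinuousAt.congr continuousAt_const this.symm


noncomputable def efd (a : ℤ → ℝ) (m : ℕ) (k : ℤ) : ℝ :=
  ∑ j ∈ Finset.range (m+1), (-1:ℝ)^j * (m.choose j : ℝ) * a (k - j)

lemma efd_rec (a : ℤ → ℝ) (m : ℕ) (k : ℤ) :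
    efd a (m+1) k = efd a m k - efd a m (k-1) := by
  have hsplit : ∀ j ∈ Finset.range (m+1),
      (-1:ℝ)^(j+1) * (((m+1).choose (j+1) : ℕ) : ℝ) * a (k - ((j:ℕ)+1 : ℕ))
      = -((-1:ℝ)^j * (m.choose j : ℝ) * a ((k-1) - j))
        + (-1:ℝ)^(j+1) * (m.choose (j+1) : ℝ) * a (k - ((j:ℕ)+1 : ℕ)) := by
    intro j _
    have harg : (k - 1) - (j:ℤ) = k - (((j:ℕ)+1 : ℕ) : ℤ) := by push_cast; ring
    rw [harg, Nat.choose_succ_succ]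
    push_cast
    ring
  have h1 : ∑ j ∈ Finset.range (m+1),
      -((-1:ℝ)^j * (m.choose j : ℝ) * a ((k-1) - j)) = - efd a m (k-1) := by
    rw [Finset.sum_neg_distrib]; rfl
  have h2 : ∑ j ∈ Finset.range (m+1),
      (-1:ℝ)^(j+1) * (m.choose (j+1) : ℝ) * a (k - ((j:ℕ)+1 : ℕ))
      = efd a m k - a k := by
    have hlast : ((-1:ℝ)^(m+1) * (m.choose (m+1) : ℝ) * a (k - ((m:ℕ)+1 : ℕ))) = 0 := by
      simp [Nat.choose_succ_self]
    rw [Finset.sum_range_succ, hlast, add_zero]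
    have := Finset.sum_range_succ'
      (fun j => (-1:ℝ)^j * (m.choose j : ℝ) * a (k - j)) m
    rw [show efd a m k = ∑ j ∈ Finset.range (m+1), (-1:ℝ)^j * (m.choose j : ℝ) * a (k - j)
      from rfl, this]
    simp
  have lhs_eq : efd a (m+1) k = (∑ j ∈ Finset.range (m+1),
        (-1:ℝ)^(j+1) * (((m+1).choose (j+1) : ℕ) : ℝ) * a (k - ((j:ℕ)+1 : ℕ)))
      + (-1:ℝ)^0 * (((m+1).choose 0 : ℕ) : ℝ) * a (k - (0:ℕ)) := by
    rw [show efd a (m+1) k = ∑ j ∈ Finset.range (m+1+1),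
        (-1:ℝ)^j * (((m+1).choose j : ℕ) : ℝ) * a (k - j) from rfl]
    exact Finset.sum_range_succ'
      (fun j => (-1:ℝ)^j * (((m+1).choose j : ℕ) : ℝ) * a (k - j)) (m+1)
  rw [lhs_eq, Finset.sum_congr rfl hsplit, Finset.sum_add_distrib, h1, h2]
  simp only [pow_zero, Nat.choose_zero_right, Nat.cast_one, one_mul, Nat.cast_zero, sub_zero]
  ring

lemma efd_support (a : ℤ → ℝ) (K : ℕ) (ha : ∀ z : ℤ, z < 0 ∨ (K:ℤ) ≤ z → a z = 0)
    (m : ℕ) (k : ℤ) (hk : k < 0 ∨ (K:ℤ) + m ≤ k) : efd a m k = 0 := by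
  unfold efd
  refine Finset.sum_eq_zero fun j hj => ?_
  rw [Finset.mem_range] at hj
  have : a (k - j) = 0 := by
    refine ha _ ?_
    rcases hk with hk | hk
    · exact Or.inl (by omega)
    · right; omega
  rw [this, mul_zero]

lemma reindex_sum (β : ℤ → ℝ) (a : ℤ → ℝ) (N : ℕ) (hN : a (N:ℤ) = 0) (hneg : a (-1) = 0) :
    ∑ k ∈ Finset.range N, a k * (β k - β ((k:ℤ)+1))
      = ∑ k ∈ Finset.range (N+1), (a k - a ((k:ℤ)-1)) * β k := by
  simp_rw [sub_mul, mul_sub]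
  rw [Finset.sum_sub_distrib, Finset.sum_sub_distrib]
  congr 1
  · rw [Finset.sum_range_succ, hN, zero_mul, add_zero]
  · rw [Finset.sum_range_succ' (fun k => a ((k:ℤ)-1) * β (k:ℤ)) N]
    simp only [Nat.cast_zero, zero_sub, hneg, zero_mul, add_zero]
    refine Finset.sum_congr rfl fun k _ => ?_
    have : ((k+1 : ℕ) : ℤ) - 1 = (k:ℤ) := by push_cast; ring
    rw [this]
    norm_num


lemma bspline_continuousAt (ν : ℕ) (s : ℝ) (hs : ν = 0 → s ≠ 0 ∧ s ≠ 1) :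
    ContinuousAt (bspline ν) s := by
  match ν with
  | 0 => exact bspline0_continuousAt (hs rfl).1 (hs rfl).2
  | ν + 1 => exact (bspline_continuous ν).continuousAt
lemma gstep (n K : ℕ) (h : ℝ) (hh : 0 < h) (cext : ℤ → ℝ)
    (hsupp : ∀ z : ℤ, z < 0 ∨ (K:ℤ) ≤ z → cext z = 0)
    (m : ℕ) (hm : m < n) (x : ℝ)
    (hx : n - m = 1 → ∀ z : ℤ, x / h ≠ (z:ℝ)) :
    HasDerivAt (fun y => (h^m)⁻¹ *
        ∑ k ∈ Finset.range (K+m), efd cext m k * bspline (n-m) (y/h - k))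
      ((h^(m+1))⁻¹ *
        ∑ k ∈ Finset.range (K+(m+1)), efd cext (m+1) k * bspline (n-(m+1)) (x/h - k)) x := by
  obtain ⟨ν, hν⟩ : ∃ ν, n - m = ν + 1 := ⟨n - m - 1, by omega⟩
  have hν' : n - (m+1) = ν := by omega
  have hterm : ∀ k : ℕ, HasDerivAt (fun y : ℝ => bspline (n-m) (y/h - k))
      ((bspline ν (x/h - k) - bspline ν (x/h - k - 1)) * h⁻¹) x := by
    intro k
    have hcond : ν = 0 → ∀ t z : ℤ, x/h - k - t ≠ (z:ℝ) := by
      intro h0 t z heq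
      exact hx (by omega) (z + k + t) (by push_cast; push_cast at heq; linarith)
    have hinner : HasDerivAt (fun y : ℝ => y/h - (k:ℝ)) h⁻¹ x := by
      simpa using ((hasDerivAt_id x).div_const h).sub_const (k:ℝ)
    have houter := bspline_hasDerivAt ν (x/h - k)
      (bspline_continuousAt ν _ (fun h0 => by
        constructor
        · simpa using hcond h0 0 0
        · simpa using hcond h0 0 1))
      (bspline_continuousAt ν _ (fun h0 => by
        constructor
        · simpa using hcond h0 1 0
        · simpa using hcond h0 1 1))
    have := houter.comp x hinner
    rw [hν]
    simpa [Function.comp_def] using this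
  have hsum := HasDerivAt.sum (fun k (_ : k ∈ Finset.range (K+m)) =>
    (hterm k).const_mul (efd cext m k))
  have hfull := hsum.const_mul ((h^m : ℝ)⁻¹)
  have hval : ((h^(m+1) : ℝ)⁻¹ *
        ∑ k ∈ Finset.range (K+(m+1)), efd cext (m+1) k * bspline (n-(m+1)) (x/h - k))
      = (h^m : ℝ)⁻¹ * ∑ k ∈ Finset.range (K+m),
          efd cext m k * ((bspline ν (x/h - k) - bspline ν (x/h - k - 1)) * h⁻¹) := by
    rw [hν']
    have hkey := reindex_sum (fun z : ℤ => bspline ν (x/h - z)) (efd cext m) (K+m)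
      (efd_support cext K hsupp m _ (Or.inr (by push_cast; omega)))
      (efd_support cext K hsupp m _ (Or.inl (by norm_num)))
    push_cast at hkey
    have hL : ∑ k ∈ Finset.range (K+m),
        efd cext m k * ((bspline ν (x/h - k) - bspline ν (x/h - k - 1)) * h⁻¹)
        = h⁻¹ * ∑ k ∈ Finset.range (K+m),
            efd cext m (k:ℤ) * (bspline ν (x/h - k) - bspline ν (x/h - ((k:ℝ)+1))) := by
      rw [Finset.mul_sum]
      refine Finset.sum_congr rfl fun k _ => ?_
      rw [sub_sub]
      ring
    have hR : ∑ k ∈ Finset.range (K+(m+1)), efd cext (m+1) k * bspline ν (x/h - k)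
        = ∑ k ∈ Finset.range (K+m+1),
            (efd cext m (k:ℤ) - efd cext m ((k:ℤ)-1)) * bspline ν (x/h - k) := by
      refine Finset.sum_congr rfl fun k _ => ?_
      rw [efd_rec]
    rw [hL, hR, ← hkey]
    rw [pow_succ, mul_inv]
    ring
  rw [hval]
  exact hfull.congr_of_eventuallyEq (Filter.Eventually.of_forall fun y => by
    simp only [Finset.sum_apply])

lemma bspline0_eq_ite (y : ℝ) (k : ℤ) :
    bspline 0 (y - k) = if ⌊y⌋ = k then (1:ℝ) else 0 := by
  show Set.indicator (Set.Ico (0:ℝ) 1) (fun _ => (1:ℝ)) (y - k) = _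
  by_cases hk : ⌊y⌋ = k
  · rw [if_pos hk]
    refine Set.indicator_of_mem ?_ _
    rw [Set.mem_Ico]
    have h1 := Int.floor_le y
    have h2 := Int.lt_floor_add_one y
    rw [hk] at h1 h2
    constructor <;> [linarith; linarith]
  · rw [if_neg hk]
    refine Set.indicator_of_notMem ?_ _
    rw [Set.mem_Ico]
    rintro ⟨h1, h2⟩
    exact hk (Int.floor_eq_iff.mpr ⟨by linarith, by linarith⟩)
lemma collapse (a : ℤ → ℝ) (N : ℕ) (ha : ∀ z : ℤ, z < 0 ∨ (N:ℤ) ≤ z → a z = 0) (z : ℤ) :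
    ∑ k ∈ Finset.range N, a k * (if z = (k:ℤ) then (1:ℝ) else 0) = a z := by
  by_cases hz : 0 ≤ z ∧ z < N
  · obtain ⟨h0, h1⟩ := hz
    lift z to ℕ using h0 with m
    simp_rw [Int.natCast_inj, mul_ite, mul_one, mul_zero]
    rw [Finset.sum_ite_eq]
    rw [if_pos (Finset.mem_range.mpr (by exact_mod_cast h1))]
  · refine (Finset.sum_eq_zero fun k hk => ?_).trans (ha z (by omega)).symm
    rw [Finset.mem_range] at hk
    have hne : z ≠ (k:ℤ) := by omega
    simp [hne]
lemma ite_floor_eq_indicator (h : ℝ) (hh : 0 < h) (k : ℕ) (x : ℝ) :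
    (if ⌊x/h⌋ = (k:ℤ) then (1:ℝ) else 0)
      = Set.indicator (Set.Ico (h*k) (h*(k+1))) (fun _ => (1:ℝ)) x := by
  have hiff : ⌊x/h⌋ = (k:ℤ) ↔ x ∈ Set.Ico (h*k) (h*(k+1)) := by
    rw [Int.floor_eq_iff, Set.mem_Ico]
    constructor
    · rintro ⟨h1, h2⟩
      constructor
      · calc h * k = (k:ℝ) * h := by ring
          _ ≤ x := by rwa [← le_div_iff₀ hh]
      · have : x / h < (k:ℝ) + 1 := by exact_mod_cast h2
        calc x = (x/h) * h := by field_simp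
          _ < ((k:ℝ)+1) * h := by exact mul_lt_mul_of_pos_right this hh
          _ = h * (k+1) := by ring
    · rintro ⟨h1, h2⟩
      constructor
      · rw [le_div_iff₀ hh]; calc (k:ℝ) * h = h * k := by ring
          _ ≤ x := h1
      · push_cast
        rw [div_lt_iff₀ hh]
        calc x < h * (k+1) := h2
          _ = ((k:ℝ)+1) * h := by ring
  by_cases hc : ⌊x/h⌋ = (k:ℤ)
  · rw [if_pos hc, Set.indicator_of_mem (hiff.mp hc)]
  · rw [if_neg hc, Set.indicator_of_notMem (fun hm => hc (hiff.mpr hm))]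
lemma integral_indicator_Ico (a b : ℝ) (hab : a ≤ b) :
    ∫ x : ℝ, Set.indicator (Set.Ico a b) (fun _ => (1:ℝ)) x = b - a := by
  rw [MeasureTheory.integral_indicator measurableSet_Ico]
  simp [Real.volume_Ico, ENNReal.toReal_ofReal (by linarith : (0:ℝ) ≤ b - a), hab]

lemma deriv_chain (n K : ℕ) (h : ℝ) (hh : 0 < h) (cext : ℤ → ℝ)
    (hsupp : ∀ z : ℤ, z < 0 ∨ (K:ℤ) ≤ z → cext z = 0) (f : ℝ → ℝ)
    (hf : ∀ x, f x = (h^(0:ℕ) : ℝ)⁻¹ *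
      ∑ k ∈ Finset.range (K+0), efd cext 0 k * bspline (n-0) (x/h - k)) :
    ∀ m, m < n → deriv^[m] f = fun x => (h^m : ℝ)⁻¹ *
      ∑ k ∈ Finset.range (K+m), efd cext m k * bspline (n-m) (x/h - k) := by
  intro m
  induction m with
  | zero => intro _; funext x; simpa using hf x
  | succ m ih =>
    intro hlt
    have hm : m < n := by omega
    rw [Function.iterate_succ_apply', ih hm]
    funext x
    exact (gstep n K h hh cext hsupp m hm x (fun h1 => absurd h1 (by omega))).deriv

lemma derivn_formula (n K : ℕ) (hn : 1 ≤ n) (h : ℝ) (hh : 0 < h) (cext : ℤ → ℝ)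
    (hsupp : ∀ z : ℤ, z < 0 ∨ (K:ℤ) ≤ z → cext z = 0) (f : ℝ → ℝ)
    (hf : ∀ x, f x = (h^(0:ℕ) : ℝ)⁻¹ *
      ∑ k ∈ Finset.range (K+0), efd cext 0 k * bspline (n-0) (x/h - k))
    (x : ℝ) (hx : ∀ z : ℤ, x/h ≠ (z:ℝ)) :
    deriv^[n] f x = (h^n : ℝ)⁻¹ *
      ∑ k ∈ Finset.range (K+n), efd cext n k * bspline 0 (x/h - k) := by
  obtain ⟨m, hm⟩ : ∃ m, n = m + 1 := ⟨n-1, by omega⟩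
  subst hm
  rw [Function.iterate_succ_apply', deriv_chain (m+1) K h hh cext hsupp f hf m (by omega)]
  have hD := (gstep (m+1) K h hh cext hsupp m (by omega) x (fun _ => hx)).deriv
  rw [hD]
  simp [Nat.sub_self]


/-- **Equivalence of continuous `L_p` seminorm and discrete `ℓ_p` norm of finite
differences for splines:** if `f = Σ_{k=0}^{K−1} c_k β_{n,h}(·−hk)` then
`‖Dⁿf‖_{L_p} = h^{−(n−1/p)} ‖dⁿ * c‖_{ℓ_p}`, where `dⁿ_j = (−1)ʲ C(n,j)` and the
coefficient sequence is extended by zero outside `{0, …, K−1}`. -/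
theorem Lp_seminorm_equals_lp_finite_differences
    (n : ℕ) (hn : 1 ≤ n) (h : ℝ) (hh : 0 < h) (p : ℝ) (hp : 0 < p)
    (K : ℕ) (c : ℕ → ℝ) (f : ℝ → ℝ)
    (hf : ∀ x : ℝ, f x = ∑ k ∈ Finset.range K, c k * bspline n (x / h - k))
    -- `c` extended by zero outside `{0, …, K−1}`
    (cext : ℤ → ℝ)
    (hcext : ∀ k : ℤ, cext k = if 0 ≤ k ∧ k < (K : ℤ) then c k.toNat else 0)
    -- the `n`-th order finite-difference sequence `dⁿ_j = (−1)ʲ C(n,j)`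
    (d : ℕ → ℝ) (hd : ∀ j : ℕ, d j = (-1) ^ j * (n.choose j : ℝ))
    -- the discrete convolution `(dⁿ * c)_k = Σ_j dⁿ_j c_{k−j}`
    (dc : ℤ → ℝ)
    (hdc : ∀ k : ℤ, dc k = ∑ j ∈ Finset.range (n + 1), d j * cext (k - j)) :
    (∫ x : ℝ, |deriv^[n] f x| ^ p) ^ (1 / p) =
      h ^ (-((n : ℝ) - 1 / p)) * (∑' k : ℤ, |dc k| ^ p) ^ (1 / p) := by
  have hp0 : p ≠ 0 := hp.ne'
  have hsupp : ∀ z : ℤ, z < 0 ∨ (K:ℤ) ≤ z → cext z = 0 := by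
    intro z hz; rw [hcext z, if_neg (by omega)]
  have hdc_efd : ∀ k : ℤ, dc k = efd cext n k := by
    intro k; rw [hdc k]; unfold efd
    refine Finset.sum_congr rfl fun j _ => ?_
    rw [hd j]
  have hdc_supp : ∀ z : ℤ, z < 0 ∨ (K:ℤ) + n ≤ z → dc z = 0 := by
    intro z hz; rw [hdc_efd]; exact efd_support cext K hsupp n z hz
  have hf' : ∀ x, f x = (h^(0:ℕ) : ℝ)⁻¹ *
      ∑ k ∈ Finset.range (K+0), efd cext 0 k * bspline (n-0) (x/h - k) := by
    intro x; rw [hf x]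
    simp only [pow_zero, inv_one, one_mul, Nat.add_zero, Nat.sub_zero]
    refine Finset.sum_congr rfl fun k hk => ?_
    rw [Finset.mem_range] at hk
    have he : efd cext 0 (k:ℤ) = c k := by
      rw [show efd cext 0 (k:ℤ) = ∑ j ∈ Finset.range 1,
        (-1:ℝ)^j * ((0:ℕ).choose j : ℝ) * cext ((k:ℤ) - j) from rfl]
      rw [Finset.sum_range_one]
      simp only [pow_zero, Nat.choose_self, Nat.cast_one, one_mul, Nat.cast_zero, sub_zero]
      rw [hcext, if_pos ⟨Int.natCast_nonneg k, by exact_mod_cast hk⟩]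
      simp
    rw [he]
  have key : ∀ x : ℝ, (∀ z : ℤ, x/h ≠ (z:ℝ)) →
      deriv^[n] f x = (h^n : ℝ)⁻¹ * dc ⌊x/h⌋ := by
    intro x hx
    rw [derivn_formula n K hn h hh cext hsupp f hf' x hx]
    congr 1
    have hterm : ∀ k ∈ Finset.range (K+n),
        efd cext n (k:ℤ) * bspline 0 (x/h - k)
          = dc (k:ℤ) * (if ⌊x/h⌋ = ((k:ℕ):ℤ) then (1:ℝ) else 0) := by
      intro k _
      rw [← hdc_efd]
      congr 1
      have hb := bspline0_eq_ite (x/h) (k:ℤ)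
      push_cast at hb
      exact hb
    rw [Finset.sum_congr rfl hterm]
    exact collapse dc (K+n)
      (fun z hz => hdc_supp z (by push_cast at hz ⊢; omega)) ⌊x/h⌋
  have hae : (fun x => |deriv^[n] f x| ^ p) =ᵐ[volume]
      (fun x => ((h^n:ℝ)⁻¹)^p * ∑ k ∈ Finset.range (K+n),
        |dc (k:ℤ)|^p * Set.indicator (Set.Ico (h*(k:ℝ)) (h*((k:ℝ)+1))) (fun _ => (1:ℝ)) x) := by
    have hnull : volume {x : ℝ | ¬ ∀ z : ℤ, x/h ≠ (z:ℝ)} = 0 := by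
      refine measure_mono_null ?_
        ((Set.countable_range (fun z : ℤ => h * (z:ℝ))).measure_zero volume)
      intro x hxx
      simp only [Set.mem_setOf_eq, not_forall, not_not] at hxx
      obtain ⟨z, hz⟩ := hxx
      exact ⟨z, by rw [(div_eq_iff hh.ne').mp hz]; ring⟩
    have hev : ∀ᵐ x : ℝ, ∀ z : ℤ, x/h ≠ (z:ℝ) := by
      rw [MeasureTheory.ae_iff]; exact hnull
    filter_upwards [hev] with x hx
    rw [key x hx, abs_mul, Real.mul_rpow (abs_nonneg _) (abs_nonneg _),
      abs_of_nonneg (inv_nonneg.mpr (pow_nonneg hh.le n))]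
    congr 1
    have hcol := collapse (fun z => |dc z|^p) (K+n)
      (fun z hz => by
        show |dc z| ^ p = 0
        rw [hdc_supp z (by push_cast at hz ⊢; omega)]
        simp [Real.zero_rpow hp0]) ⌊x/h⌋
    rw [← hcol]
    refine Finset.sum_congr rfl fun k _ => ?_
    rw [ite_floor_eq_indicator h hh k x]
  rw [MeasureTheory.integral_congr_ae hae]
  have hint : ∀ k ∈ Finset.range (K+n), Integrable (fun x : ℝ =>
      |dc (k:ℤ)|^p * Set.indicator (Set.Ico (h*(k:ℝ)) (h*((k:ℝ)+1))) (fun _ => (1:ℝ)) x) := by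
    intro k _
    refine Integrable.const_mul ?_ _
    rw [integrable_indicator_iff measurableSet_Ico]
    exact integrableOn_const measure_Ico_lt_top.ne
  rw [MeasureTheory.integral_const_mul, MeasureTheory.integral_finset_sum _ hint]
  have hint2 : ∀ k ∈ Finset.range (K+n), (∫ x : ℝ,
      |dc (k:ℤ)|^p * Set.indicator (Set.Ico (h*(k:ℝ)) (h*((k:ℝ)+1))) (fun _ => (1:ℝ)) x)
      = |dc (k:ℤ)|^p * h := by
    intro k _
    rw [MeasureTheory.integral_const_mul,
      integral_indicator_Ico _ _ (mul_le_mul_of_nonneg_left (by linarith) hh.le)]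
    ring
  rw [Finset.sum_congr rfl hint2, ← Finset.sum_mul]
  set S : ℝ := ∑ k ∈ Finset.range (K+n), |dc (k:ℤ)|^p with hS
  have htsum : (∑' k : ℤ, |dc k|^p) = S := by
    refine (tsum_eq_sum (s := (Finset.range (K+n)).map
      ⟨(Nat.cast : ℕ → ℤ), fun a b hab => by exact_mod_cast hab⟩) ?_).trans ?_
    · intro z hz
      have hzz : z < 0 ∨ (K:ℤ) + n ≤ z := by
        by_contra hcon
        push_neg at hcon
        exact hz (Finset.mem_map.mpr ⟨z.toNat, Finset.mem_range.mpr (by omega),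
          by show ((z.toNat : ℕ) : ℤ) = z; omega⟩)
      rw [hdc_supp z hzz]
      simp [Real.zero_rpow hp0]
    · rw [Finset.sum_map]; rfl
  rw [htsum]
  have hS0 : 0 ≤ S := Finset.sum_nonneg fun k _ => Real.rpow_nonneg (abs_nonneg _) p
  have hA : (0:ℝ) < h^n := pow_pos hh n
  rw [Real.mul_rpow (by positivity) (by positivity),
    Real.mul_rpow hS0 hh.le,
    ← Real.rpow_natCast h n]
  rw [← Real.rpow_mul (by positivity : (0:ℝ) ≤ (h ^ (n:ℝ))⁻¹), mul_one_div_cancel hp0,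
    Real.rpow_one]
  rw [← Real.rpow_neg hh.le]
  rw [show -((n:ℝ) - 1/p) = -(n:ℝ) + 1/p by ring, Real.rpow_add hh]
  ring
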